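/- Assume the joint system (Y_n, N_n) satisfies the recursion above and the criticality condition m(m−1)G_n'(m) = G_n(m) for all n (where G_n(s) = E(s^{Y_n})). Then the weighted expected number of open paths satisfies E[m^{Y_{n+1}}(1+Y_{n+1})N_{n+1}] = G_n(m)^{m−1}·E[m^{Y_n}(1+Y_n)N_n], and hence E[m^{Y_n}(1+Y_n)N_n] = E[m^{Y_0}(1+Y_0)N_0]·∏_{k=0}^{n−1} G_k(m)^{m−1}. -/

import Mathlib

open scoped ENNReal

/-- Law of the componentwise sum of `n` i.i.d. copies of a pair-valued `PMF`. -/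
noncomputable def sumIID2 (p : PMF (ℕ × ℕ)) : ℕ → PMF (ℕ × ℕ)
  | 0 => PMF.pure (0, 0)
  | (k+1) => (sumIID2 p k).bind (fun s => p.map (fun a => (a.1 + s.1, a.2 + s.2)))

/-- One step of the joint recursion:
`(Y', N') = (Σ_Y − 1, Σ_N)` if `Σ_Y ≥ 1` and `(0, 0)` if `Σ_Y = 0`. -/
noncomputable def jointStep (m : ℕ) (p : PMF (ℕ × ℕ)) : PMF (ℕ × ℕ) :=
  (sumIID2 p m).map (fun z => if z.1 = 0 then (0, 0) else (z.1 - 1, z.2))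

private lemma exp_pure {β : Type*} (x : β) (f : β → ℝ≥0∞) :
    ∑' b, (PMF.pure x) b * f b = f x := by
  rw [tsum_eq_single x (fun b hb => by simp [PMF.pure_apply, hb])]
  simp [PMF.pure_apply]

private lemma exp_bind {α β : Type*} (p : PMF α) (q : α → PMF β) (f : β → ℝ≥0∞) :
    ∑' b, (p.bind q) b * f b = ∑' a, p a * ∑' b, q a b * f b := by
  simp only [PMF.bind_apply]
  have h1 : ∀ b, (∑' a, p a * q a b) * f b = ∑' a, p a * (q a b * f b) := by
    intro b
    rw [← ENNReal.tsum_mul_right]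
    exact tsum_congr fun a => mul_assoc _ _ _
  rw [tsum_congr h1, ENNReal.tsum_comm]
  exact tsum_congr fun a => ENNReal.tsum_mul_left

private lemma exp_map {α β : Type*} (p : PMF α) (g : α → β) (f : β → ℝ≥0∞) :
    ∑' b, (p.map g) b * f b = ∑' a, p a * f (g a) := by
  show ∑' b, (p.bind (PMF.pure ∘ g)) b * f b = _
  rw [exp_bind]
  exact tsum_congr fun a => by rw [Function.comp_apply, exp_pure]

private lemma exp_split4 {α : Type*} (p : PMF α) (c1 c2 c3 c4 : ℝ≥0∞)
    (g1 g2 g3 g4 h : α → ℝ≥0∞)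
    (hh : ∀ a, h a = c1 * g1 a + c2 * g2 a + c3 * g3 a + c4 * g4 a) :
    ∑' a, p a * h a
      = c1 * ∑' a, p a * g1 a + c2 * ∑' a, p a * g2 a
        + c3 * ∑' a, p a * g3 a + c4 * ∑' a, p a * g4 a := by
  have h1 : ∀ a, p a * h a
      = c1 * (p a * g1 a) + (c2 * (p a * g2 a)
        + (c3 * (p a * g3 a) + c4 * (p a * g4 a))) := fun a => by rw [hh]; ring
  rw [tsum_congr h1, ENNReal.tsum_add, ENNReal.tsum_add, ENNReal.tsum_add,
    ENNReal.tsum_mul_left, ENNReal.tsum_mul_left, ENNReal.tsum_mul_left,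
    ENNReal.tsum_mul_left]
  ring

/-- Joint moments of the componentwise sum of `k` i.i.d. copies. -/
private lemma moments (M : ℝ≥0∞) (p : PMF (ℕ × ℕ)) (k : ℕ) :
    (∑' z : ℕ × ℕ, (sumIID2 p k) z * M ^ z.1)
        = (∑' z : ℕ × ℕ, p z * M ^ z.1) ^ k
  ∧ (∑' z : ℕ × ℕ, (sumIID2 p k) z * ((z.1 : ℝ≥0∞) * M ^ z.1))
        = (k : ℝ≥0∞) * (∑' z : ℕ × ℕ, p z * ((z.1 : ℝ≥0∞) * M ^ z.1))
          * (∑' z : ℕ × ℕ, p z * M ^ z.1) ^ (k - 1)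
  ∧ (∑' z : ℕ × ℕ, (sumIID2 p k) z * (M ^ z.1 * (z.2 : ℝ≥0∞)))
        = (k : ℝ≥0∞) * (∑' z : ℕ × ℕ, p z * (M ^ z.1 * (z.2 : ℝ≥0∞)))
          * (∑' z : ℕ × ℕ, p z * M ^ z.1) ^ (k - 1)
  ∧ (∑' z : ℕ × ℕ, (sumIID2 p k) z * ((z.1 : ℝ≥0∞) * M ^ z.1 * (z.2 : ℝ≥0∞)))
        = (k : ℝ≥0∞) * (∑' z : ℕ × ℕ, p z * ((z.1 : ℝ≥0∞) * M ^ z.1 * (z.2 : ℝ≥0∞)))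
            * (∑' z : ℕ × ℕ, p z * M ^ z.1) ^ (k - 1)
          + (k : ℝ≥0∞) * ((k : ℝ≥0∞) - 1)
            * (∑' z : ℕ × ℕ, p z * ((z.1 : ℝ≥0∞) * M ^ z.1))
            * (∑' z : ℕ × ℕ, p z * (M ^ z.1 * (z.2 : ℝ≥0∞)))
            * (∑' z : ℕ × ℕ, p z * M ^ z.1) ^ (k - 2) := by
  set A := ∑' z : ℕ × ℕ, p z * M ^ z.1 with hA
  set B := ∑' z : ℕ × ℕ, p z * ((z.1 : ℝ≥0∞) * M ^ z.1) with hB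
  set C := ∑' z : ℕ × ℕ, p z * (M ^ z.1 * (z.2 : ℝ≥0∞)) with hC
  set D := ∑' z : ℕ × ℕ, p z * ((z.1 : ℝ≥0∞) * M ^ z.1 * (z.2 : ℝ≥0∞)) with hD
  induction k with
  | zero =>
      refine ⟨?_, ?_, ?_, ?_⟩ <;>
      · show ∑' z : ℕ × ℕ, (PMF.pure ((0, 0) : ℕ × ℕ)) z * _ = _
        rw [exp_pure]
        simp
  | succ k ih =>
      obtain ⟨ih0, ih1, ih2, ih3⟩ := ih
      -- the four "one-more-copy" recursions
      have step0 : (∑' z : ℕ × ℕ, (sumIID2 p (k+1)) z * M ^ z.1)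
          = A * (A ^ k) := by
        show (∑' z : ℕ × ℕ,
          ((sumIID2 p k).bind (fun s => p.map (fun a => (a.1 + s.1, a.2 + s.2)))) z
            * M ^ z.1) = _
        rw [exp_bind]
        have hinner : ∀ s : ℕ × ℕ,
            (∑' b, (p.map (fun a : ℕ × ℕ => (a.1 + s.1, a.2 + s.2))) b * M ^ b.1)
              = M ^ s.1 * A := by
          intro s
          rw [exp_map]
          have := exp_split4 p (M ^ s.1) 0 0 0
            (fun a => M ^ a.1) (fun a => M ^ a.1) (fun a => M ^ a.1) (fun a => M ^ a.1)
            (fun a => M ^ ((a.1 + s.1, a.2 + s.2) : ℕ × ℕ).1)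
            (fun a => by simp [pow_add]; ring)
          rw [this]; try ring
        rw [tsum_congr fun s => by rw [hinner]]
        have := exp_split4 (sumIID2 p k) A 0 0 0
          (fun s => M ^ s.1) (fun s => M ^ s.1) (fun s => M ^ s.1) (fun s => M ^ s.1)
          (fun s => M ^ s.1 * A) (fun s => by ring)
        rw [this, ih0]; ring
      have step1 : (∑' z : ℕ × ℕ, (sumIID2 p (k+1)) z * ((z.1 : ℝ≥0∞) * M ^ z.1))
          = B * A ^ k + A * ((k : ℝ≥0∞) * B * A ^ (k - 1)) := by
        show (∑' z : ℕ × ℕ,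
          ((sumIID2 p k).bind (fun s => p.map (fun a => (a.1 + s.1, a.2 + s.2)))) z
            * ((z.1 : ℝ≥0∞) * M ^ z.1)) = _
        rw [exp_bind]
        have hinner : ∀ s : ℕ × ℕ,
            (∑' b, (p.map (fun a : ℕ × ℕ => (a.1 + s.1, a.2 + s.2))) b
              * ((b.1 : ℝ≥0∞) * M ^ b.1))
              = M ^ s.1 * B + (s.1 : ℝ≥0∞) * M ^ s.1 * A := by
          intro s
          rw [exp_map]
          have := exp_split4 p (M ^ s.1) ((s.1 : ℝ≥0∞) * M ^ s.1) 0 0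
            (fun a => (a.1 : ℝ≥0∞) * M ^ a.1) (fun a => M ^ a.1)
            (fun a => M ^ a.1) (fun a => M ^ a.1)
            (fun a => ((((a.1 + s.1, a.2 + s.2) : ℕ × ℕ).1 : ℝ≥0∞))
              * M ^ ((a.1 + s.1, a.2 + s.2) : ℕ × ℕ).1)
            (fun a => by push_cast [pow_add]; ring)
          rw [this]; try ring
        rw [tsum_congr fun s => by rw [hinner]]
        have := exp_split4 (sumIID2 p k) B A 0 0
          (fun s => M ^ s.1) (fun s => (s.1 : ℝ≥0∞) * M ^ s.1)
          (fun s => M ^ s.1) (fun s => M ^ s.1)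
          (fun s => M ^ s.1 * B + (s.1 : ℝ≥0∞) * M ^ s.1 * A) (fun s => by ring)
        rw [this, ih0, ih1]; ring
      have step2 : (∑' z : ℕ × ℕ, (sumIID2 p (k+1)) z * (M ^ z.1 * (z.2 : ℝ≥0∞)))
          = C * A ^ k + A * ((k : ℝ≥0∞) * C * A ^ (k - 1)) := by
        show (∑' z : ℕ × ℕ,
          ((sumIID2 p k).bind (fun s => p.map (fun a => (a.1 + s.1, a.2 + s.2)))) z
            * (M ^ z.1 * (z.2 : ℝ≥0∞))) = _
        rw [exp_bind]
        have hinner : ∀ s : ℕ × ℕ,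
            (∑' b, (p.map (fun a : ℕ × ℕ => (a.1 + s.1, a.2 + s.2))) b
              * (M ^ b.1 * (b.2 : ℝ≥0∞)))
              = M ^ s.1 * C + M ^ s.1 * (s.2 : ℝ≥0∞) * A := by
          intro s
          rw [exp_map]
          have := exp_split4 p (M ^ s.1) (M ^ s.1 * (s.2 : ℝ≥0∞)) 0 0
            (fun a => M ^ a.1 * (a.2 : ℝ≥0∞)) (fun a => M ^ a.1)
            (fun a => M ^ a.1) (fun a => M ^ a.1)
            (fun a => M ^ ((a.1 + s.1, a.2 + s.2) : ℕ × ℕ).1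
              * ((((a.1 + s.1, a.2 + s.2) : ℕ × ℕ).2 : ℝ≥0∞)))
            (fun a => by push_cast [pow_add]; ring)
          rw [this]; try ring
        rw [tsum_congr fun s => by rw [hinner]]
        have := exp_split4 (sumIID2 p k) C A 0 0
          (fun s => M ^ s.1) (fun s => M ^ s.1 * (s.2 : ℝ≥0∞))
          (fun s => M ^ s.1) (fun s => M ^ s.1)
          (fun s => M ^ s.1 * C + M ^ s.1 * (s.2 : ℝ≥0∞) * A) (fun s => by ring)
        rw [this, ih0, ih2]; ring
      have step3 : (∑' z : ℕ × ℕ,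
            (sumIID2 p (k+1)) z * ((z.1 : ℝ≥0∞) * M ^ z.1 * (z.2 : ℝ≥0∞)))
          = D * A ^ k + B * ((k : ℝ≥0∞) * C * A ^ (k - 1))
            + C * ((k : ℝ≥0∞) * B * A ^ (k - 1))
            + A * ((k : ℝ≥0∞) * D * A ^ (k - 1)
                + (k : ℝ≥0∞) * ((k : ℝ≥0∞) - 1) * B * C * A ^ (k - 2)) := by
        show (∑' z : ℕ × ℕ,
          ((sumIID2 p k).bind (fun s => p.map (fun a => (a.1 + s.1, a.2 + s.2)))) z
            * ((z.1 : ℝ≥0∞) * M ^ z.1 * (z.2 : ℝ≥0∞))) = _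
        rw [exp_bind]
        have hinner : ∀ s : ℕ × ℕ,
            (∑' b, (p.map (fun a : ℕ × ℕ => (a.1 + s.1, a.2 + s.2))) b
              * ((b.1 : ℝ≥0∞) * M ^ b.1 * (b.2 : ℝ≥0∞)))
              = M ^ s.1 * D + M ^ s.1 * (s.2 : ℝ≥0∞) * B
                + (s.1 : ℝ≥0∞) * M ^ s.1 * C
                + (s.1 : ℝ≥0∞) * M ^ s.1 * (s.2 : ℝ≥0∞) * A := by
          intro s
          rw [exp_map]
          have := exp_split4 p (M ^ s.1) (M ^ s.1 * (s.2 : ℝ≥0∞))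
            ((s.1 : ℝ≥0∞) * M ^ s.1) ((s.1 : ℝ≥0∞) * M ^ s.1 * (s.2 : ℝ≥0∞))
            (fun a => (a.1 : ℝ≥0∞) * M ^ a.1 * (a.2 : ℝ≥0∞))
            (fun a => (a.1 : ℝ≥0∞) * M ^ a.1)
            (fun a => M ^ a.1 * (a.2 : ℝ≥0∞)) (fun a => M ^ a.1)
            (fun a => ((((a.1 + s.1, a.2 + s.2) : ℕ × ℕ).1 : ℝ≥0∞))
              * M ^ ((a.1 + s.1, a.2 + s.2) : ℕ × ℕ).1
              * ((((a.1 + s.1, a.2 + s.2) : ℕ × ℕ).2 : ℝ≥0∞)))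
            (fun a => by push_cast [pow_add]; ring)
          rw [this]; try ring
        rw [tsum_congr fun s => by rw [hinner]]
        have := exp_split4 (sumIID2 p k) D B C A
          (fun s => M ^ s.1) (fun s => M ^ s.1 * (s.2 : ℝ≥0∞))
          (fun s => (s.1 : ℝ≥0∞) * M ^ s.1)
          (fun s => (s.1 : ℝ≥0∞) * M ^ s.1 * (s.2 : ℝ≥0∞))
          (fun s => M ^ s.1 * D + M ^ s.1 * (s.2 : ℝ≥0∞) * B
            + (s.1 : ℝ≥0∞) * M ^ s.1 * C
            + (s.1 : ℝ≥0∞) * M ^ s.1 * (s.2 : ℝ≥0∞) * A) (fun s => by ring)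
        rw [this, ih0, ih1, ih2, ih3]; try ring
      refine ⟨?_, ?_, ?_, ?_⟩
      · rw [step0, pow_succ]; ring
      · rw [step1]
        rcases k with _ | j
        · simp
        · simp only [Nat.add_sub_cancel]
          push_cast
          rw [pow_succ]
          ring
      · rw [step2]
        rcases k with _ | j
        · simp
        · simp only [Nat.add_sub_cancel]
          push_cast
          rw [pow_succ]
          ring
      · have hsub : ∀ x : ℝ≥0∞, x + 1 - 1 = x :=
          fun x => ENNReal.add_sub_cancel_right ENNReal.one_ne_top
        have h21 : (2 : ℝ≥0∞) - 1 = 1 := by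
          rw [show (2 : ℝ≥0∞) = 1 + 1 from one_add_one_eq_two.symm, hsub]
        have h11 : (1 : ℝ≥0∞) - 1 = 0 := tsub_self 1
        rw [step3]
        rcases k with _ | j
        · simp
        · rcases j with _ | i
          · push_cast
            simp only [h21, h11]
            norm_num
            try ring
          · simp only [Nat.add_sub_cancel, show i + 2 + 1 - 2 = i + 1 by omega,
              show i + 2 - 2 = i by omega]
            push_cast
            simp only [hsub]
            rw [pow_succ, pow_succ]
            ring

theorem stmt17 (m : ℕ) (hm : 2 ≤ m) (P : ℕ → PMF (ℕ × ℕ))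
    (hP : ∀ n, P (n+1) = jointStep m (P n))
    -- criticality: (m−1)·E(Y_n m^{Y_n}) = E(m^{Y_n}) for every n
    (hcrit : ∀ n, ((m : ℝ≥0∞) - 1)
          * (∑' z : ℕ × ℕ, P n z * ((z.1 : ℝ≥0∞) * (m : ℝ≥0∞) ^ z.1))
        = ∑' z : ℕ × ℕ, P n z * (m : ℝ≥0∞) ^ z.1)
    -- finiteness of the weighted moments
    (hfin : ∀ n, (∑' z : ℕ × ℕ,
        P n z * ((m : ℝ≥0∞) ^ z.1 * (1 + (z.1 : ℝ≥0∞)) * (z.2 : ℝ≥0∞))) < ∞)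
    (hfin2 : ∀ n, (∑' z : ℕ × ℕ,
        P n z * ((m : ℝ≥0∞) ^ z.1 * (1 + (z.1 : ℝ≥0∞)))) < ∞) :
    (∀ n, (∑' z : ℕ × ℕ, P (n+1) z * ((m : ℝ≥0∞) ^ z.1 * (1 + (z.1 : ℝ≥0∞)) * (z.2 : ℝ≥0∞)))
        = (∑' z : ℕ × ℕ, P n z * (m : ℝ≥0∞) ^ z.1) ^ (m - 1)
          * ∑' z : ℕ × ℕ, P n z * ((m : ℝ≥0∞) ^ z.1 * (1 + (z.1 : ℝ≥0∞)) * (z.2 : ℝ≥0∞))) ∧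
    ∀ n, (∑' z : ℕ × ℕ, P n z * ((m : ℝ≥0∞) ^ z.1 * (1 + (z.1 : ℝ≥0∞)) * (z.2 : ℝ≥0∞)))
        = (∑' z : ℕ × ℕ, P 0 z * ((m : ℝ≥0∞) ^ z.1 * (1 + (z.1 : ℝ≥0∞)) * (z.2 : ℝ≥0∞)))
          * ∏ k ∈ Finset.range n,
              (∑' z : ℕ × ℕ, P k z * (m : ℝ≥0∞) ^ z.1) ^ (m - 1) := by
  have hM0 : (m : ℝ≥0∞) ≠ 0 := by
    simp only [ne_eq, Nat.cast_eq_zero]; omega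
  have hMtop : (m : ℝ≥0∞) ≠ ∞ := ENNReal.natCast_ne_top m
  have part1 : ∀ n,
      (∑' z : ℕ × ℕ, P (n+1) z * ((m : ℝ≥0∞) ^ z.1 * (1 + (z.1 : ℝ≥0∞)) * (z.2 : ℝ≥0∞)))
        = (∑' z : ℕ × ℕ, P n z * (m : ℝ≥0∞) ^ z.1) ^ (m - 1)
          * ∑' z : ℕ × ℕ, P n z * ((m : ℝ≥0∞) ^ z.1 * (1 + (z.1 : ℝ≥0∞)) * (z.2 : ℝ≥0∞)) := by
    intro n
    set p := P n with hp
    set A := ∑' z : ℕ × ℕ, p z * (m : ℝ≥0∞) ^ z.1 with hA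
    set B := ∑' z : ℕ × ℕ, p z * ((z.1 : ℝ≥0∞) * (m : ℝ≥0∞) ^ z.1) with hB
    set C := ∑' z : ℕ × ℕ, p z * ((m : ℝ≥0∞) ^ z.1 * (z.2 : ℝ≥0∞)) with hC
    set D := ∑' z : ℕ × ℕ, p z * ((z.1 : ℝ≥0∞) * (m : ℝ≥0∞) ^ z.1 * (z.2 : ℝ≥0∞)) with hD
    -- the target expectation at level n splits as C + D
    have hsplit :
        (∑' z : ℕ × ℕ, p z * ((m : ℝ≥0∞) ^ z.1 * (1 + (z.1 : ℝ≥0∞)) * (z.2 : ℝ≥0∞)))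
          = C + D := by
      rw [hC, hD, ← ENNReal.tsum_add]
      exact tsum_congr fun z => by ring
    -- compute m · (expectation at level n+1)
    have hmain : (m : ℝ≥0∞) *
        (∑' z : ℕ × ℕ, P (n+1) z * ((m : ℝ≥0∞) ^ z.1 * (1 + (z.1 : ℝ≥0∞)) * (z.2 : ℝ≥0∞)))
        = ∑' z : ℕ × ℕ,
            (sumIID2 p m) z * ((z.1 : ℝ≥0∞) * (m : ℝ≥0∞) ^ z.1 * (z.2 : ℝ≥0∞)) := by
      rw [hP n]
      show (m : ℝ≥0∞) * (∑' z : ℕ × ℕ,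
        ((sumIID2 p m).map (fun z => if z.1 = 0 then (0, 0) else (z.1 - 1, z.2))) z
          * ((m : ℝ≥0∞) ^ z.1 * (1 + (z.1 : ℝ≥0∞)) * (z.2 : ℝ≥0∞))) = _
      rw [exp_map, ← ENNReal.tsum_mul_left]
      refine tsum_congr fun z => ?_
      rcases z with ⟨y, nn⟩
      cases y with
      | zero => simp
      | succ t =>
          simp only [if_neg (Nat.succ_ne_zero t), Nat.succ_sub_one]
          push_cast
          rw [pow_succ]
          ring
    obtain ⟨-, -, -, h3⟩ := moments ((m : ℝ≥0∞)) p m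
    rw [h3] at hmain
    rw [← hA, ← hB, ← hC, ← hD] at hmain
    -- use criticality to simplify
    have hcr : ((m : ℝ≥0∞) - 1) * B = A := hcrit n
    have hAA : A * A ^ (m - 2) = A ^ (m - 1) := by
      rw [← pow_succ']
      congr 1
      omega
    have hmain2 : (m : ℝ≥0∞) *
        (∑' z : ℕ × ℕ, P (n+1) z * ((m : ℝ≥0∞) ^ z.1 * (1 + (z.1 : ℝ≥0∞)) * (z.2 : ℝ≥0∞)))
        = (m : ℝ≥0∞) * (A ^ (m - 1) * (C + D)) := by
      rw [hmain]
      have : (m : ℝ≥0∞) * ((m : ℝ≥0∞) - 1) * B * C * A ^ (m - 2)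
          = (m : ℝ≥0∞) * C * A ^ (m - 1) := by
        rw [← hAA]
        calc (m : ℝ≥0∞) * ((m : ℝ≥0∞) - 1) * B * C * A ^ (m - 2)
            = (m : ℝ≥0∞) * C * ((((m : ℝ≥0∞) - 1) * B) * A ^ (m - 2)) := by ring
          _ = (m : ℝ≥0∞) * C * (A * A ^ (m - 2)) := by rw [hcr]
          _ = _ := by ring
      rw [this]
      ring
    have := (ENNReal.mul_right_inj hM0 hMtop).mp hmain2
    rw [this, hsplit]
  refine ⟨part1, ?_⟩
  intro n
  induction n with
  | zero => simp
  | succ n ih =>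
      rw [part1 n, ih, Finset.prod_range_succ]
      ring
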